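/- Consider a birth-death chain on {0,...,n} with backward biases satisfying γ_k ≥ (1/r)(1 − (k−1)/d) for 1 ≤ k ≤ g(n), where d = d(n) → ∞ and g(n) → ∞ with g(n) = o(d). Then the absorption-at-n probability from state 1 is at most 1 / ( (1 − r^{−g(n)})/(1 − 1/r) − o(1) ), and for constant r > 1 this tends to 1 − 1/r as n → ∞. -/

import Mathlib

open Filter

/-- **Growing-degree circulant vs Clique: upper bound.**
Consider, for each `n`, a birth-death chain on `{0,...,n}` with positive backward biases
satisfying `γ n k ≥ (1/r)(1 − (k−1)/d n)` for `1 ≤ k ≤ g n`, where `d n → ∞`, `g n → ∞`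
and `g = o(d)`. Then for constant `r > 1` the absorption-at-`n` probability from state `1`
satisfies `limsup_{n→∞} f n ≤ 1 − 1/r`. -/
theorem growing_circulant_vs_clique_upper_bound
    (r : ℝ) (hr : 1 < r)
    (d g : ℕ → ℕ)
    (hd : Tendsto (fun n => (d n : ℝ)) atTop atTop)
    (hg : Tendsto (fun n => (g n : ℝ)) atTop atTop)
    (hgo : (fun n => (g n : ℝ)) =o[atTop] fun n => (d n : ℝ))
    (hgn : ∀ n, g n ≤ n - 1)
    (γ : ℕ → ℕ → ℝ)
    (hγpos : ∀ n k, 1 ≤ k → k ≤ n - 1 → 0 < γ n k)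
    (hγ : ∀ n k, 1 ≤ k → k ≤ g n →
      γ n k ≥ (1 / r) * (1 - ((k : ℝ) - 1) / (d n : ℝ)))
    (f : ℕ → ℝ)
    (hf : ∀ n, f n = 1 / (1 + ∑ j ∈ Finset.Icc 1 (n - 1), ∏ k ∈ Finset.Icc 1 j, γ n k)) :
    atTop.limsup f ≤ 1 - 1 / r := by
  have hr0 : (0:ℝ) < r := lt_trans one_pos hr
  have hrinv : 0 < 1 / r := by positivity
  have hrinv1 : 1 / r < 1 := by rw [div_lt_one hr0]; exact hr
  -- the uniform lower bound q n on γ n k for k ≤ g n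
  set q : ℕ → ℝ := fun n => (1 / r) * (1 - ((g n : ℝ) - 1) / (d n : ℝ)) with hq_def
  -- q → 1/r
  have hdiv : Tendsto (fun n => ((g n : ℝ) - 1) / (d n : ℝ)) atTop (nhds 0) := by
    have h1 : Tendsto (fun n => (g n : ℝ) / (d n : ℝ)) atTop (nhds 0) :=
      hgo.tendsto_div_nhds_zero
    have h2 : Tendsto (fun n => 1 / (d n : ℝ)) atTop (nhds 0) := by
      simp only [one_div]; exact hd.inv_tendsto_atTop
    have := h1.sub h2
    simpa [sub_div] using this
  have hq_tendsto : Tendsto q atTop (nhds (1 / r)) := by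
    have h1 : Tendsto (fun _ : ℕ => (1:ℝ)) atTop (nhds 1) := tendsto_const_nhds
    have := (h1.sub hdiv).const_mul (1 / r)
    simpa [hq_def] using this
  -- eventually q n ∈ (0, c) with c < 1
  set c : ℝ := (1 / r + 1) / 2 with hc_def
  have hc0 : 0 ≤ c := by positivity
  have hc1 : c < 1 := by rw [hc_def]; linarith
  have hqc : ∀ᶠ n in atTop, 0 < q n ∧ q n < c := by
    have hmem : Set.Ioo (0:ℝ) c ∈ nhds (1 / r) := by
      apply Ioo_mem_nhds hrinv
      rw [hc_def]; linarith
    filter_upwards [hq_tendsto hmem] with n hn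
    exact ⟨hn.1, hn.2⟩
  -- eventually q n ≤ γ n k for 1 ≤ k ≤ g n
  have hqγ : ∀ᶠ n in atTop, ∀ k, 1 ≤ k → k ≤ g n → q n ≤ γ n k := by
    have hd0 : ∀ᶠ n in atTop, (0:ℝ) < (d n : ℝ) := hd.eventually_gt_atTop 0
    filter_upwards [hd0] with n hdn k hk1 hkg
    refine le_trans ?_ (hγ n k hk1 hkg)
    have hk : (k:ℝ) ≤ (g n : ℝ) := Nat.cast_le.mpr hkg
    apply mul_le_mul_of_nonneg_left _ (le_of_lt hrinv)
    apply sub_le_sub_left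
    gcongr
  -- sums are nonnegative, so 0 ≤ f n ≤ 1
  have hSpos : ∀ n, 0 ≤ ∑ j ∈ Finset.Icc 1 (n - 1), ∏ k ∈ Finset.Icc 1 j, γ n k := by
    intro n
    apply Finset.sum_nonneg
    intro j hj
    apply Finset.prod_nonneg
    intro k hk
    simp only [Finset.mem_Icc] at hj hk
    exact le_of_lt (hγpos n k hk.1 (le_trans hk.2 hj.2))
  have hf0 : ∀ n, 0 ≤ f n := by
    intro n
    rw [hf n]
    have := hSpos n
    positivity
  -- the comparison sum T
  set T : ℕ → ℝ := fun n => ∑ j ∈ Finset.Icc 1 (g n), q n ^ j with hT_def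
  -- eventually f n ≤ 1 / (1 + T n)
  have hfT : ∀ᶠ n in atTop, f n ≤ 1 / (1 + T n) := by
    filter_upwards [hqc, hqγ] with n hqn hqγn
    have hTS : T n ≤ ∑ j ∈ Finset.Icc 1 (n - 1), ∏ k ∈ Finset.Icc 1 j, γ n k := by
      calc T n ≤ ∑ j ∈ Finset.Icc 1 (g n), ∏ k ∈ Finset.Icc 1 j, γ n k := by
            apply Finset.sum_le_sum
            intro j hj
            simp only [Finset.mem_Icc] at hj
            have : ∏ k ∈ Finset.Icc 1 j, q n ≤ ∏ k ∈ Finset.Icc 1 j, γ n k := by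
              apply Finset.prod_le_prod
              · intro k _; exact le_of_lt hqn.1
              · intro k hk
                simp only [Finset.mem_Icc] at hk
                exact hqγn k hk.1 (le_trans hk.2 hj.2)
            simpa [Nat.card_Icc] using this
        _ ≤ ∑ j ∈ Finset.Icc 1 (n - 1), ∏ k ∈ Finset.Icc 1 j, γ n k := by
            apply Finset.sum_le_sum_of_subset_of_nonneg
            · exact Finset.Icc_subset_Icc_right (hgn n)
            · intro j hj _
              simp only [Finset.mem_Icc] at hj
              apply Finset.prod_nonneg
              intro k hk
              simp only [Finset.mem_Icc] at hk
              exact le_of_lt (hγpos n k hk.1 (le_trans hk.2 hj.2))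
    have hT0 : 0 ≤ T n := by
      apply Finset.sum_nonneg
      intro j _
      exact pow_nonneg (le_of_lt hqn.1) j
    rw [hf n]
    exact one_div_le_one_div_of_le (by linarith) (by linarith)
  -- q n ^ (g n) → 0 and q n ^ (g n + 1) → 0
  have hgnat : Tendsto g atTop atTop := tendsto_natCast_atTop_iff.mp hg
  have hcg : Tendsto (fun n => c ^ g n) atTop (nhds 0) :=
    (tendsto_pow_atTop_nhds_zero_of_lt_one hc0 hc1).comp hgnat
  have hqg : Tendsto (fun n => q n ^ g n) atTop (nhds 0) := by
    apply tendsto_of_tendsto_of_tendsto_of_le_of_le' tendsto_const_nhds hcg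
    · filter_upwards [hqc] with n hn
      exact pow_nonneg (le_of_lt hn.1) _
    · filter_upwards [hqc] with n hn
      exact pow_le_pow_left₀ (le_of_lt hn.1) (le_of_lt hn.2) _
  -- T → 1/(r-1)
  have hT_tendsto : Tendsto T atTop (nhds (1 / (r - 1))) := by
    have hclosed : ∀ᶠ n in atTop, T n = (q n ^ (g n + 1) - q n) / (q n - 1) := by
      filter_upwards [hqc] with n hn
      have hq1 : q n ≠ 1 := ne_of_lt (lt_trans hn.2 hc1)
      have : Finset.Icc 1 (g n) = Finset.Ico 1 (g n + 1) := by
        rw [Finset.Ico_add_one_right_eq_Icc]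
      rw [hT_def]
      simp only
      rw [this, geom_sum_Ico hq1 (Nat.le_add_left 1 (g n))]
      ring_nf
    have hlim : Tendsto (fun n => (q n ^ (g n + 1) - q n) / (q n - 1)) atTop
        (nhds ((0 - 1 / r) / (1 / r - 1))) := by
      apply Tendsto.div
      · apply Tendsto.sub _ hq_tendsto
        have : Tendsto (fun n => q n ^ g n * q n) atTop (nhds (0 * (1 / r))) :=
          hqg.mul hq_tendsto
        simpa [pow_succ] using this
      · exact hq_tendsto.sub tendsto_const_nhds
      · intro h; rw [sub_eq_zero] at h; exact (ne_of_lt hrinv1) h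
    have hne2 : r - 1 ≠ 0 := sub_ne_zero.mpr (ne_of_gt hr)
    have heq : (0 - 1 / r) / (1 / r - 1) = 1 / (r - 1) := by
      rw [div_eq_div_iff (by intro h; rw [sub_eq_zero] at h; exact (ne_of_lt hrinv1) h)
        (sub_ne_zero.mpr (ne_of_gt hr))]
      field_simp
      ring
    rw [← heq]
    refine Tendsto.congr' ?_ hlim
    filter_upwards [hclosed] with n h
    exact h.symm
  -- the bound B = 1/(1+T) → 1 - 1/r
  have hB_tendsto : Tendsto (fun n => 1 / (1 + T n)) atTop (nhds (1 - 1 / r)) := by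
    have hr1 : (0:ℝ) < r - 1 := by linarith
    have hd1 : (1:ℝ) + 1 / (r - 1) ≠ 0 := by
      have : 0 < 1 / (r - 1) := by positivity
      linarith
    have h1 : Tendsto (fun _ : ℕ => (1:ℝ)) atTop (nhds 1) := tendsto_const_nhds
    have := h1.div (tendsto_const_nhds.add hT_tendsto) hd1
    have heq : (1:ℝ) / (1 + 1 / (r - 1)) = 1 - 1 / r := by
      field_simp
      ring
    rwa [heq] at this
  -- conclude
  have h1 : atTop.limsup f ≤ atTop.limsup (fun n => 1 / (1 + T n)) := by
    have hcob : IsCoboundedUnder (· ≤ ·) atTop f :=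
      IsBoundedUnder.isCoboundedUnder_le (isBoundedUnder_of ⟨0, fun n => hf0 n⟩)
    exact limsup_le_limsup hfT hcob hB_tendsto.isBoundedUnder_le
  rw [hB_tendsto.limsup_eq] at h1
  exact h1
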